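/- arXiv:2303.05067 — 4 statements merged into one kernel-verified Lean document; each statement's English description precedes it below -/
import Mathlib

section
/- Fix real numbers f_1 ≥ f_2 ≥ … ≥ f_K and 1 ≤ l ≤ K. Then (1/C(K,l)) · Σ_{A ⊆ [K], |A| = l} max_{k ∈ A} f_k = Σ_{k=1}^{K−l+1} (C(K−k, l−1)/C(K,l)) · f_k. That is, the average over all l-element subsets of the maximum of f over the subset equals the OWA criterion with weights w_k = C(K−k, l−1)/C(K,l) for k ≤ K−l+1 and w_k = 0 otherwise. -/
open Finset

theorem stmt_8 (K l : ℕ) (hK : 1 ≤ K) (hl : 1 ≤ l) (hlK : l ≤ K)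
    (f : Fin K → ℝ) (hf : ∀ i j : Fin K, i ≤ j → f j ≤ f i) :
    (1 / (K.choose l : ℝ)) *
      ∑ A ∈ ((Finset.univ : Finset (Fin K)).powersetCard l).attach,
        A.1.sup' (Finset.card_pos.mp (by
          rw [(Finset.mem_powersetCard.mp A.2).2]; omega)) f
    = ∑ k : Fin K, (((K - 1 - (k : ℕ)).choose (l - 1) : ℝ) / (K.choose l : ℝ)) * f k := by
  have hK0 : 0 < K := hK
  have hne : ∀ A ∈ ((Finset.univ : Finset (Fin K)).powersetCard l), A.Nonempty := by
    intro A hA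
    apply Finset.card_pos.mp
    rw [(Finset.mem_powersetCard.mp hA).2]; omega
  set m : Finset (Fin K) → Fin K := fun A => (A.min).getD ⟨0, hK0⟩ with hm
  have hmin : ∀ (A : Finset (Fin K)) (h : A.Nonempty), m A = A.min' h := by
    intro A h
    rw [hm]
    simp only
    rw [← Finset.coe_min' h]
    rfl
  have h1 : ∀ A ∈ ((Finset.univ : Finset (Fin K)).powersetCard l),
      ∀ (h : A.Nonempty), A.sup' h f = f (m A) := by
    intro A hA h
    rw [hmin A h]
    apply le_antisymm
    · apply Finset.sup'_le
      intro b hb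
      exact hf _ _ (Finset.min'_le A b hb)
    · exact Finset.le_sup' f (A.min'_mem h)
  have hcard : ∀ k : Fin K,
      (((Finset.univ : Finset (Fin K)).powersetCard l).filter (fun A => m A = k)).card
        = (K - 1 - (k : ℕ)).choose (l - 1) := by
    intro k
    have : (((Finset.univ : Finset (Fin K)).powersetCard l).filter (fun A => m A = k)).card
        = ((Finset.Ioi k).powersetCard (l - 1)).card := by
      apply Finset.card_bij' (fun A _ => A.erase k) (fun B _ => insert k B)
      · intro A hA
        obtain ⟨hAS, hAm⟩ := Finset.mem_filter.mp hA
        have hAn := hne A hAS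
        have hkA : k ∈ A := by
          rw [hmin A hAn] at hAm
          rw [← hAm]; exact A.min'_mem hAn
        exact Finset.insert_erase hkA
      · intro B hB
        obtain ⟨hBsub, _⟩ := Finset.mem_powersetCard.mp hB
        have hkB : k ∉ B := by
          intro h
          exact lt_irrefl k (Finset.mem_Ioi.mp (hBsub h))
        exact Finset.erase_insert hkB

      · intro A hA
        obtain ⟨hAS, hAm⟩ := Finset.mem_filter.mp hA
        have hAn := hne A hAS
        have hAc := (Finset.mem_powersetCard.mp hAS).2
        have hkA : k ∈ A := by
          rw [hmin A hAn] at hAm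
          rw [← hAm]; exact A.min'_mem hAn
        rw [Finset.mem_powersetCard]
        constructor
        · intro x hx
          obtain ⟨hxk, hxA⟩ := Finset.mem_erase.mp hx
          rw [Finset.mem_Ioi]
          have hle : k ≤ x := by
            rw [hmin A hAn] at hAm
            rw [← hAm]; exact A.min'_le x hxA
          exact lt_of_le_of_ne hle (Ne.symm hxk)
        · rw [Finset.card_erase_of_mem hkA, hAc]
      · intro B hB
        obtain ⟨hBsub, hBc⟩ := Finset.mem_powersetCard.mp hB
        have hkB : k ∉ B := by
          intro h
          exact lt_irrefl k (Finset.mem_Ioi.mp (hBsub h))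
        have hins : (insert k B).card = l := by
          rw [Finset.card_insert_of_notMem hkB, hBc]; omega
        rw [Finset.mem_filter]
        constructor
        · rw [Finset.mem_powersetCard]
          exact ⟨Finset.subset_univ _, hins⟩
        · have hn : (insert k B).Nonempty := ⟨k, Finset.mem_insert_self k B⟩
          rw [hmin _ hn]
          apply le_antisymm
          · exact Finset.min'_le _ k (Finset.mem_insert_self k B)
          · apply Finset.le_min'
            intro y hy
            rcases Finset.mem_insert.mp hy with h | h
            · exact h.ge
            · exact (Finset.mem_Ioi.mp (hBsub h)).le
    rw [this, Finset.card_powersetCard, Fin.card_Ioi]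
  have hX : (∑ A ∈ ((Finset.univ : Finset (Fin K)).powersetCard l).attach,
        A.1.sup' (Finset.card_pos.mp (by
          rw [(Finset.mem_powersetCard.mp A.2).2]; omega)) f)
      = ∑ k : Fin K, ((K - 1 - (k : ℕ)).choose (l - 1) : ℝ) * f k := by
    have h2 : (∑ A ∈ ((Finset.univ : Finset (Fin K)).powersetCard l).attach,
          A.1.sup' (Finset.card_pos.mp (by
            rw [(Finset.mem_powersetCard.mp A.2).2]; omega)) f)
        = ∑ A ∈ ((Finset.univ : Finset (Fin K)).powersetCard l), f (m A) := by
      rw [← Finset.sum_attach ((Finset.univ : Finset (Fin K)).powersetCard l)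
        (fun A => f (m A))]
      apply Finset.sum_congr rfl
      intro A _
      exact h1 A.1 A.2 _
    rw [h2, ← Finset.sum_fiberwise ((Finset.univ : Finset (Fin K)).powersetCard l) m
      (fun A => f (m A))]
    apply Finset.sum_congr rfl
    intro k _
    rw [Finset.sum_congr rfl (fun A hA => by rw [(Finset.mem_filter.mp hA).2]),
      Finset.sum_const, ← hcard k]
    simp [nsmul_eq_mul]
  have hC : (K.choose l : ℝ) ≠ 0 := by
    have := Nat.choose_pos hlK
    exact_mod_cast this.ne'
  rw [hX, Finset.mul_sum]
  apply Finset.sum_congr rfl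
  intro k _
  field_simp
end

section
/- Generalized Hurwicz approximation guarantee (pessimistic regime): Let 𝓕 be a finite family of subsets of [K] with |F| ≥ 2 for all F, masses m(F) > 0 summing to 1, z = max_F |F|, and α ∈ [1/2, 1]. Let X be a set of 'solutions', and for x ∈ X let f(x, k) ≥ 0 be the cost of x under scenario k, with H_α(x) = Σ_F m(F)(α max_{k∈F} f(x,k) + (1−α) min_{k∈F} f(x,k)). If x̂ minimizes Σ_k v_k f(x,k) over X (where v_k = Σ_{F∋k} m(F)) and x* minimizes H_α over X, then H_α(x̂) ≤ z·H_α(x*). -/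
theorem stmt_15 (K : ℕ) (hK : 1 ≤ K)
    (𝓕 : Finset (Finset (Fin K))) (h𝓕 : ∀ F ∈ 𝓕, 2 ≤ F.card)
    (m : Finset (Fin K) → ℝ) (hm_pos : ∀ F ∈ 𝓕, 0 < m F)
    (hm_sum : ∑ F ∈ 𝓕, m F = 1)
    (z : ℕ) (hz : z = 𝓕.sup Finset.card)
    (X : Type*) [Nonempty X]
    (f : X → Fin K → ℝ) (hf : ∀ x k, 0 ≤ f x k)
    (v : Fin K → ℝ) (hv : ∀ k, v k = ∑ F ∈ 𝓕.filter (fun F => k ∈ F), m F)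
    (α : ℝ) (hα : 1 / 2 ≤ α ∧ α ≤ 1)
    (H : X → ℝ)
    (hH : ∀ x, H x = ∑ F ∈ 𝓕.attach, m F.1 *
      (α * F.1.sup' (Finset.card_pos.mp (by have := h𝓕 F.1 F.2; omega)) (f x) +
       (1 - α) * F.1.inf' (Finset.card_pos.mp (by have := h𝓕 F.1 F.2; omega)) (f x)))
    (xhat xstar : X)
    (hxhat : ∀ x : X, ∑ k, v k * f xhat k ≤ ∑ k, v k * f x k)
    (hxstar : ∀ x : X, H xstar ≤ H x) :
    H xhat ≤ (z : ℝ) * H xstar := by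
  classical
  -- S x = weighted sum of per-scenario-set sums
  set S : X → ℝ := fun x => ∑ F ∈ 𝓕.attach, m F.1 * ∑ k ∈ F.1, f x k with hS
  have hA : ∀ x, ∑ k, v k * f x k = S x := by
    intro x
    have : ∑ k, v k * f x k = ∑ F ∈ 𝓕, m F * ∑ k ∈ F, f x k := by
      simp only [hv, Finset.sum_mul]
      rw [show (∑ k : Fin K, ∑ F ∈ 𝓕.filter (fun F => k ∈ F), m F * f x k)
          = ∑ k : Fin K, ∑ F ∈ 𝓕, if k ∈ F then m F * f x k else 0 by
        refine Finset.sum_congr rfl fun k _ => ?_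
        rw [Finset.sum_filter]]
      rw [Finset.sum_comm]
      refine Finset.sum_congr rfl fun F hF => ?_
      rw [Finset.sum_ite_mem, Finset.univ_inter, Finset.mul_sum]
    rw [this, hS, ← Finset.sum_attach 𝓕 (fun F => m F * ∑ k ∈ F, f x k)]
  -- per-set key facts
  have key : ∀ x, ∀ F : Finset (Fin K), ∀ hF : F ∈ 𝓕, ∀ hne : F.Nonempty,
      α * F.sup' hne (f x) + (1 - α) * F.inf' hne (f x) ≤ α * ∑ k ∈ F, f x k ∧
      α * ∑ k ∈ F, f x k ≤ (z : ℝ) * (α * F.sup' hne (f x) + (1 - α) * F.inf' hne (f x)) := by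
    intro x F hF hne
    obtain ⟨k1, hk1, hk1eq⟩ := F.exists_mem_eq_sup' hne (f x)
    obtain ⟨k2, hk2, hk2eq⟩ := F.exists_mem_eq_inf' hne (f x)
    have hμM : F.inf' hne (f x) ≤ F.sup' hne (f x) := hk1eq ▸ Finset.inf'_le (f x) hk1
    have hμ0 : 0 ≤ F.inf' hne (f x) := by rw [hk2eq]; exact hf x k2
    have hM0 : 0 ≤ F.sup' hne (f x) := le_trans hμ0 hμM
    have hc1 : 1 < F.card := by have := h𝓕 F hF; omega
    obtain ⟨k', hk', hk'ne⟩ := Finset.exists_mem_ne hc1 k1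
    have hpair : f x k1 + f x k' ≤ ∑ k ∈ F, f x k := by
      have hsub : ({k1, k'} : Finset (Fin K)) ⊆ F := by
        intro a ha
        simp only [Finset.mem_insert, Finset.mem_singleton] at ha
        rcases ha with h | h <;> simp [h, hk1, hk']
      calc f x k1 + f x k' = ∑ k ∈ ({k1, k'} : Finset (Fin K)), f x k := by
            rw [Finset.sum_pair (Ne.symm hk'ne)]
        _ ≤ ∑ k ∈ F, f x k :=
            Finset.sum_le_sum_of_subset_of_nonneg hsub (fun k hk _ => hf x k)
    have hsum : F.sup' hne (f x) + F.inf' hne (f x) ≤ ∑ k ∈ F, f x k := by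
      have h1 : F.inf' hne (f x) ≤ f x k' := Finset.inf'_le (f x) hk'
      rw [hk1eq]; linarith
    have hcardz : (F.card : ℝ) ≤ (z : ℝ) := by
      exact_mod_cast hz ▸ Finset.le_sup (f := Finset.card) hF
    have hs : ∑ k ∈ F, f x k ≤ (F.card : ℝ) * F.sup' hne (f x) := by
      have := Finset.sum_le_card_nsmul F (f x) (F.sup' hne (f x))
        (fun k hk => Finset.le_sup' (f x) hk)
      simpa [nsmul_eq_mul] using this
    have hsz : ∑ k ∈ F, f x k ≤ (z : ℝ) * F.sup' hne (f x) :=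
      le_trans hs (mul_le_mul_of_nonneg_right hcardz hM0)
    have hz1 : (1 : ℝ) ≤ (z : ℝ) := by
      have : 2 ≤ z := hz ▸ le_trans (h𝓕 F hF) (Finset.le_sup (f := Finset.card) hF)
      exact_mod_cast le_trans (by norm_num) this
    obtain ⟨hα1, hα2⟩ := hα
    constructor
    · nlinarith [hsum, hμM, hμ0]
    · have h1 := mul_le_mul_of_nonneg_left hsz (le_trans (by norm_num : (0:ℝ) ≤ 1/2) hα1)
      have h2 : 0 ≤ (z:ℝ) * ((1 - α) * F.inf' hne (f x)) := mul_nonneg (Nat.cast_nonneg z) (mul_nonneg (by linarith) hμ0)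
      nlinarith [h1, h2]
  -- H x ≤ α * S x
  have hI : ∀ x, H x ≤ α * S x := by
    intro x
    rw [hH, hS, Finset.mul_sum]
    refine Finset.sum_le_sum fun F hF => ?_
    have hm := (hm_pos F.1 F.2).le
    have hk := (key x F.1 F.2 (Finset.card_pos.mp (by have := h𝓕 F.1 F.2; omega))).1
    calc m F.1 * _ ≤ m F.1 * (α * ∑ k ∈ F.1, f x k) := mul_le_mul_of_nonneg_left hk hm
      _ = α * (m F.1 * ∑ k ∈ F.1, f x k) := by ring
  -- α * S x ≤ z * H x
  have hII : ∀ x, α * S x ≤ (z : ℝ) * H x := by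
    intro x
    rw [hH, hS, Finset.mul_sum, Finset.mul_sum]
    refine Finset.sum_le_sum fun F hF => ?_
    have hm := (hm_pos F.1 F.2).le
    have hk := (key x F.1 F.2 (Finset.card_pos.mp (by have := h𝓕 F.1 F.2; omega))).2
    calc α * (m F.1 * ∑ k ∈ F.1, f x k) = m F.1 * (α * ∑ k ∈ F.1, f x k) := by ring
      _ ≤ m F.1 * ((z : ℝ) * _) := mul_le_mul_of_nonneg_left hk hm
      _ = (z : ℝ) * (m F.1 * _) := by ring
  have hα0 : (0 : ℝ) ≤ α := le_trans (by norm_num) hα.1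
  have hSS : S xhat ≤ S xstar := by
    rw [← hA, ← hA]; exact hxhat xstar
  calc H xhat ≤ α * S xhat := hI xhat
    _ ≤ α * S xstar := mul_le_mul_of_nonneg_left hSS hα0
    _ ≤ (z : ℝ) * H xstar := hII xstar
end

section
/- γ-approximation transfer: Let α ∈ (0,1], γ ≥ 1, and let G(x) = Σ_{F∈𝓕} m(F) max_{k∈F} f(x,k) (the worst-case expectation). Suppose x̂ ∈ X satisfies G(x̂) ≤ γ·G(x) for all x ∈ X, G(x̂) > 0, and x* minimizes H_α(x) = Σ_F m(F)(α max_{k∈F} f(x,k) + (1−α) min_{k∈F} f(x,k)). Then H_α(x̂) ≤ γ·(1 + ((1−α)/α)·ρ)·H_α(x*), where ρ = (Σ_F m(F) min_{k∈F} f(x̂,k)) / (Σ_F m(F) max_{k∈F} f(x̂,k)) ∈ [0,1]. -/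
theorem stmt_17 (K : ℕ) (hK : 1 ≤ K)
    (𝓕 : Finset (Finset (Fin K))) (h𝓕 : ∀ F ∈ 𝓕, F.Nonempty)
    (m : Finset (Fin K) → ℝ) (hm_pos : ∀ F ∈ 𝓕, 0 < m F)
    (hm_sum : ∑ F ∈ 𝓕, m F = 1)
    (X : Type*) [Nonempty X]
    (f : X → Fin K → ℝ) (hf : ∀ x k, 0 ≤ f x k)
    (α : ℝ) (hα : 0 < α ∧ α ≤ 1)
    (γ : ℝ) (hγ : 1 ≤ γ)
    (G : X → ℝ)
    (hG : ∀ x, G x = ∑ F ∈ 𝓕.attach, m F.1 * F.1.sup' (h𝓕 F.1 F.2) (f x))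
    (H : X → ℝ)
    (hH : ∀ x, H x = ∑ F ∈ 𝓕.attach, m F.1 *
      (α * F.1.sup' (h𝓕 F.1 F.2) (f x) + (1 - α) * F.1.inf' (h𝓕 F.1 F.2) (f x)))
    (xhat xstar : X)
    (hxhat : ∀ x : X, G xhat ≤ γ * G x)
    (hGpos : 0 < G xhat)
    (hxstar : ∀ x : X, H xstar ≤ H x)
    (ρ : ℝ)
    (hρ : ρ = (∑ F ∈ 𝓕.attach, m F.1 * F.1.inf' (h𝓕 F.1 F.2) (f xhat)) /
              (∑ F ∈ 𝓕.attach, m F.1 * F.1.sup' (h𝓕 F.1 F.2) (f xhat))) :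
    (0 ≤ ρ ∧ ρ ≤ 1) ∧ H xhat ≤ γ * (1 + ((1 - α) / α) * ρ) * H xstar := by
  obtain ⟨hα0, hα1⟩ := hα
  set M : X → ℝ := fun x => ∑ F ∈ 𝓕.attach, m F.1 * F.1.sup' (h𝓕 F.1 F.2) (f x) with hM
  set N : X → ℝ := fun x => ∑ F ∈ 𝓕.attach, m F.1 * F.1.inf' (h𝓕 F.1 F.2) (f x) with hN
  have hN0 : ∀ x, 0 ≤ N x := by
    intro x
    apply Finset.sum_nonneg
    intro F _
    exact mul_nonneg (hm_pos F.1 F.2).le (Finset.le_inf' _ _ fun b hb => hf x b)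
  have hNM : ∀ x, N x ≤ M x := by
    intro x
    apply Finset.sum_le_sum
    intro F _
    obtain ⟨k, hk⟩ := h𝓕 F.1 F.2
    exact mul_le_mul_of_nonneg_left ((Finset.inf'_le _ hk).trans (Finset.le_sup' _ hk)) (hm_pos F.1 F.2).le
  have hHeq : ∀ x, H x = α * M x + (1 - α) * N x := by
    intro x
    rw [hH, hM, hN, Finset.mul_sum, Finset.mul_sum, ← Finset.sum_add_distrib]
    apply Finset.sum_congr rfl
    intro F _
    ring
  have hGM : ∀ x, G x = M x := fun x => hG x
  have hMhat : 0 < M xhat := by rw [← hGM]; exact hGpos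
  have hρ' : ρ = N xhat / M xhat := hρ
  have hρ0 : 0 ≤ ρ := by rw [hρ']; exact div_nonneg (hN0 xhat) hMhat.le
  have hρ1 : ρ ≤ 1 := by rw [hρ', div_le_one hMhat]; exact hNM xhat
  refine ⟨⟨hρ0, hρ1⟩, ?_⟩
  have key : H xhat = α * M xhat * (1 + ((1 - α) / α) * ρ) := by
    rw [hHeq, hρ']
    field_simp
  have hc : 0 ≤ 1 + ((1 - α) / α) * ρ := by
    have : 0 ≤ (1 - α) / α := div_nonneg (by linarith) hα0.le
    nlinarith
  have hMstar : M xhat ≤ γ * M xstar := by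
    have := hxhat xstar
    rwa [hGM, hGM] at this
  have hHstar : α * M xstar ≤ H xstar := by
    rw [hHeq]
    nlinarith [hN0 xstar]
  calc H xhat = α * M xhat * (1 + ((1 - α) / α) * ρ) := key
    _ ≤ α * (γ * M xstar) * (1 + ((1 - α) / α) * ρ) := by
        apply mul_le_mul_of_nonneg_right _ hc
        exact mul_le_mul_of_nonneg_left hMstar hα0.le
    _ = γ * (1 + ((1 - α) / α) * ρ) * (α * M xstar) := by ring
    _ ≤ γ * (1 + ((1 - α) / α) * ρ) * H xstar := by
        apply mul_le_mul_of_nonneg_left hHstar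
        positivity
end

section
/- Upper expectation formula for belief functions: Let 𝓕 be a finite family of nonempty subsets of [K] with masses m(F) > 0 summing to 1, and let f : [K] → ℝ. Consider allocations a(k,F) ≥ 0 defined for k ∈ F, F ∈ 𝓕, satisfying Σ_{k∈F} a(k,F) = m(F) for every F, and the induced probability p_k = Σ_{F∋k} a(k,F). Then the maximum of Σ_k p_k f(k) over all such allocations equals Σ_{F∈𝓕} m(F)·max_{k∈F} f(k), and the minimum equals Σ_{F∈𝓕} m(F)·min_{k∈F} f(k). -/
open Finset

lemma swap_sum18 {K : ℕ} (𝓕 : Finset (Finset (Fin K))) (a : Fin K → Finset (Fin K) → ℝ)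
    (f : Fin K → ℝ) :
    ∑ k, (∑ F ∈ 𝓕.filter (fun F => k ∈ F), a k F) * f k
      = ∑ F ∈ 𝓕, ∑ k ∈ F, a k F * f k := by
  simp_rw [Finset.sum_mul, Finset.sum_filter]
  rw [Finset.sum_comm]
  refine Finset.sum_congr rfl fun F hF => ?_
  rw [← Finset.sum_filter]
  congr 1
  ext k
  simp

theorem stmt_18 (K : ℕ) (hK : 1 ≤ K)
    (𝓕 : Finset (Finset (Fin K))) (h𝓕 : ∀ F ∈ 𝓕, F.Nonempty)
    (m : Finset (Fin K) → ℝ) (hm_pos : ∀ F ∈ 𝓕, 0 < m F)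
    (hm_sum : ∑ F ∈ 𝓕, m F = 1)
    (f : Fin K → ℝ) :
    IsGreatest {s : ℝ | ∃ a : Fin K → Finset (Fin K) → ℝ,
        (∀ k F, 0 ≤ a k F) ∧
        (∀ F ∈ 𝓕, ∑ k ∈ F, a k F = m F) ∧
        s = ∑ k, (∑ F ∈ 𝓕.filter (fun F => k ∈ F), a k F) * f k}
      (∑ F ∈ 𝓕.attach, m F.1 * F.1.sup' (h𝓕 F.1 F.2) f) ∧
    IsLeast {s : ℝ | ∃ a : Fin K → Finset (Fin K) → ℝ,
        (∀ k F, 0 ≤ a k F) ∧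
        (∀ F ∈ 𝓕, ∑ k ∈ F, a k F = m F) ∧
        s = ∑ k, (∑ F ∈ 𝓕.filter (fun F => k ∈ F), a k F) * f k}
      (∑ F ∈ 𝓕.attach, m F.1 * F.1.inf' (h𝓕 F.1 F.2) f) := by
  classical
  set S : Finset (Fin K) → ℝ := fun F => if h : F.Nonempty then F.sup' h f else 0 with hS
  set I : Finset (Fin K) → ℝ := fun F => if h : F.Nonempty then F.inf' h f else 0 with hI
  have hStgt : (∑ F ∈ 𝓕.attach, m F.1 * F.1.sup' (h𝓕 F.1 F.2) f) = ∑ F ∈ 𝓕, m F * S F := by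
    rw [← Finset.sum_attach 𝓕 (fun F => m F * S F)]
    refine Finset.sum_congr rfl fun F _ => ?_
    simp [hS, dif_pos (h𝓕 F.1 F.2)]
  have hItgt : (∑ F ∈ 𝓕.attach, m F.1 * F.1.inf' (h𝓕 F.1 F.2) f) = ∑ F ∈ 𝓕, m F * I F := by
    rw [← Finset.sum_attach 𝓕 (fun F => m F * I F)]
    refine Finset.sum_congr rfl fun F _ => ?_
    simp [hI, dif_pos (h𝓕 F.1 F.2)]
  set ps : Finset (Fin K) → Fin K := fun F =>
    if h : F.Nonempty then (Finset.exists_mem_eq_sup' h f).choose else ⟨0, hK⟩ with hps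
  set pi : Finset (Fin K) → Fin K := fun F =>
    if h : F.Nonempty then (Finset.exists_mem_eq_inf' h f).choose else ⟨0, hK⟩ with hpi
  have hps_mem : ∀ F ∈ 𝓕, ps F ∈ F := fun F hF => by
    simp only [hps, dif_pos (h𝓕 F hF)]
    exact (Finset.exists_mem_eq_sup' (h𝓕 F hF) f).choose_spec.1
  have hps_val : ∀ F ∈ 𝓕, f (ps F) = S F := fun F hF => by
    simp only [hps, hS, dif_pos (h𝓕 F hF)]
    exact ((Finset.exists_mem_eq_sup' (h𝓕 F hF) f).choose_spec.2).symm
  have hpi_mem : ∀ F ∈ 𝓕, pi F ∈ F := fun F hF => by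
    simp only [hpi, dif_pos (h𝓕 F hF)]
    exact (Finset.exists_mem_eq_inf' (h𝓕 F hF) f).choose_spec.1
  have hpi_val : ∀ F ∈ 𝓕, f (pi F) = I F := fun F hF => by
    simp only [hpi, hI, dif_pos (h𝓕 F hF)]
    exact ((Finset.exists_mem_eq_inf' (h𝓕 F hF) f).choose_spec.2).symm
  constructor
  · constructor
    · rw [hStgt]
      refine ⟨fun k F => if k = ps F ∧ F ∈ 𝓕 then m F else 0, ?_, ?_, ?_⟩
      · intro k F
        dsimp only
        split
        · exact le_of_lt (hm_pos F (by tauto))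
        · exact le_refl 0
      · intro F hF
        simp only [hF, and_true]
        rw [Finset.sum_ite_eq' F (ps F) (fun _ => m F)]
        simp [hps_mem F hF]
      · rw [swap_sum18]
        refine (Finset.sum_congr rfl fun F hF => ?_).symm
        have : ∑ k ∈ F, (if k = ps F ∧ F ∈ 𝓕 then m F else 0) * f k
            = ∑ k ∈ F, (if k = ps F then m F * f k else 0) := by
          refine Finset.sum_congr rfl fun k _ => ?_
          by_cases h : k = ps F <;> simp [h, hF]
        rw [this, Finset.sum_ite_eq' F (ps F) (fun k => m F * f k)]
        simp [hps_mem F hF, hps_val F hF]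
    · rintro s ⟨a, ha0, ham, rfl⟩
      rw [hStgt, swap_sum18]
      refine Finset.sum_le_sum fun F hF => ?_
      calc ∑ k ∈ F, a k F * f k ≤ ∑ k ∈ F, a k F * S F := by
            refine Finset.sum_le_sum fun k hk => ?_
            refine mul_le_mul_of_nonneg_left ?_ (ha0 k F)
            simp only [hS, dif_pos (h𝓕 F hF)]
            exact Finset.le_sup' f hk
        _ = m F * S F := by rw [← Finset.sum_mul, ham F hF]
  · constructor
    · rw [hItgt]
      refine ⟨fun k F => if k = pi F ∧ F ∈ 𝓕 then m F else 0, ?_, ?_, ?_⟩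
      · intro k F
        dsimp only
        split
        · exact le_of_lt (hm_pos F (by tauto))
        · exact le_refl 0
      · intro F hF
        simp only [hF, and_true]
        rw [Finset.sum_ite_eq' F (pi F) (fun _ => m F)]
        simp [hpi_mem F hF]
      · rw [swap_sum18]
        refine (Finset.sum_congr rfl fun F hF => ?_).symm
        have : ∑ k ∈ F, (if k = pi F ∧ F ∈ 𝓕 then m F else 0) * f k
            = ∑ k ∈ F, (if k = pi F then m F * f k else 0) := by
          refine Finset.sum_congr rfl fun k _ => ?_
          by_cases h : k = pi F <;> simp [h, hF]
        rw [this, Finset.sum_ite_eq' F (pi F) (fun k => m F * f k)]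
        simp [hpi_mem F hF, hpi_val F hF]
    · rintro s ⟨a, ha0, ham, rfl⟩
      rw [hItgt, swap_sum18]
      refine Finset.sum_le_sum fun F hF => ?_
      calc m F * I F = ∑ k ∈ F, a k F * I F := by rw [← Finset.sum_mul, ham F hF]
        _ ≤ ∑ k ∈ F, a k F * f k := by
            refine Finset.sum_le_sum fun k hk => ?_
            refine mul_le_mul_of_nonneg_left ?_ (ha0 k F)
            simp only [hI, dif_pos (h𝓕 F hF)]
            exact Finset.inf'_le f hk
end
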